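/- Let α be a permutation of a finite set X with a cycle z_a = (i₁ i₂ ⋯ i_a) of length a. Under the induced action of α on unordered pairs (subsets of size 1 or 2) of X, the a² ordered pairs with both components in the support of z_a give rise to orbits whose cycle-structure contribution is x_{a/2} · x_a^{a/2} if a is even, and x_a^{(a+1)/2} if a is odd. -/

import Mathlib

open Set

section Core
variable {a : ℕ} [NeZero a]

private def P (d : ZMod a) : Set (Set (ZMod a)) := {t | ∃ j, t = ({j, j + d} : Set (ZMod a))}

private lemma G_iterate (s : Set (ZMod a)) (k : ℕ) :
    (fun u : Set (ZMod a) => (· + 1) '' u)^[k] s = (· + (k : ZMod a)) '' s := by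
  induction k with
  | zero => simp
  | succ n ih =>
    rw [Function.iterate_succ_apply', ih, ← Set.image_comp]
    congr 1
    funext x
    push_cast
    simp [Function.comp, add_assoc]

private lemma orbit_pair (i d : ZMod a) :
    {t | ∃ k : ℕ, (fun u : Set (ZMod a) => (· + 1) '' u)^[k] ({i, i + d} : Set (ZMod a)) = t}
      = P d := by
  ext t
  simp only [Set.mem_setOf_eq, G_iterate, P]
  constructor
  · rintro ⟨k, rfl⟩
    exact ⟨i + k, by rw [Set.image_pair]; congr 1; ring⟩
  · rintro ⟨j, rfl⟩
    obtain ⟨k, hk⟩ := ZMod.natCast_rightInverse.surjective (j - i)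
    refine ⟨k, ?_⟩
    rw [Set.image_pair, hk]
    congr 1 <;> ring

private lemma ncard_P_of (d : ZMod a) (h : d = 0 ∨ 2 * d ≠ 0) : (P d).ncard = a := by
  have hinj : Function.Injective (fun j : ZMod a => ({j, j + d} : Set (ZMod a))) := by
    intro i j hij
    rcases Set.pair_eq_pair_iff.mp hij with ⟨h1, _⟩ | ⟨h1, h2⟩
    · exact h1
    · rcases h with rfl | h2d
      · simpa using h1
      · exact absurd (by linear_combination h2 - h1) h2d
  have : P d = (fun j : ZMod a => ({j, j + d} : Set (ZMod a))) '' Set.univ := by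
    ext t; simp [P, eq_comm]
  rw [this, Set.ncard_image_of_injective _ hinj, Set.ncard_univ, Nat.card_zmod]

private lemma ncard_P_half (d : ZMod a) (hd : d ≠ 0) (h2 : 2 * d = 0) : (P d).ncard = a / 2 := by
  classical
  set f : ZMod a → Set (ZMod a) := fun j => ({j, j + d} : Set (ZMod a)) with hf
  have key : ∀ i j : ZMod a, f i = f j ↔ (i = j ∨ i = j + d) := by
    intro i j
    constructor
    · intro hij
      rcases Set.pair_eq_pair_iff.mp hij with ⟨h1, _⟩ | ⟨h1, _⟩
      · exact Or.inl h1
      · exact Or.inr h1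
    · rintro (rfl | rfl)
      · rfl
      · show ({j + d, j + d + d} : Set (ZMod a)) = {j, j + d}
        have : j + d + d = j := by linear_combination h2
        rw [this, Set.pair_comm]
  let B : Finset (Set (ZMod a)) := Finset.univ.image f
  have hsum : (Finset.univ : Finset (ZMod a)).card
      = ∑ t ∈ B, (Finset.univ.filter (fun i => f i = t)).card :=
    Finset.card_eq_sum_card_fiberwise (fun i _ => Finset.mem_image_of_mem f (Finset.mem_univ i))
  have hfib : ∀ t ∈ B, (Finset.univ.filter (fun i => f i = t)).card = 2 := by
    intro t ht
    obtain ⟨j, _, rfl⟩ := Finset.mem_image.mp ht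
    have : Finset.univ.filter (fun i => f i = f j) = {j, j + d} := by
      ext i
      simp [key, Finset.mem_insert]
    rw [this, Finset.card_insert_of_notMem (by
      simp only [Finset.mem_singleton]
      intro h
      exact hd (by linear_combination -h)), Finset.card_singleton]
  have h2B : a = 2 * B.card := by
    have := hsum
    rw [Finset.sum_congr rfl hfib, Finset.sum_const, smul_eq_mul] at this
    simpa [Finset.card_univ, ZMod.card, mul_comm] using this
  have hPB : P d = ↑B := by
    ext t
    simp [P, B, Finset.mem_image, eq_comm, f]
  rw [hPB, Set.ncard_coe_finset]
  omega

private lemma P_neg (d : ZMod a) : P (-d) = P d := by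
  have : ∀ c : ZMod a, P c ⊆ P (-c) := by
    intro c t ht
    obtain ⟨j, rfl⟩ := ht
    exact ⟨j + c, by rw [Set.pair_comm]; congr 1; ring⟩
  apply subset_antisymm (by simpa using this (-d)) (this d)

private lemma exists_rep (ha : 1 ≤ a) (d : ZMod a) : ∃ m : ℕ, m ≤ a / 2 ∧ P d = P (m : ZMod a) := by
  by_cases h : d.val ≤ a / 2
  · exact ⟨d.val, h, by rw [ZMod.natCast_zmod_val]⟩
  · refine ⟨a - d.val, by omega, ?_⟩
    have hlt := d.val_lt
    have : ((a - d.val : ℕ) : ZMod a) = -d := by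
      have h0 : ((a - d.val : ℕ) : ZMod a) + ((d.val : ℕ) : ZMod a) = 0 := by
        rw [← Nat.cast_add, show a - d.val + d.val = a by omega]
        exact ZMod.natCast_self a
      rw [ZMod.natCast_zmod_val] at h0
      linear_combination h0
    rw [this, P_neg]

private lemma P_cast_inj (ha : 1 ≤ a) {m n : ℕ} (hm : m ≤ a / 2) (hn : n ≤ a / 2)
    (h : P (m : ZMod a) = P (n : ZMod a)) : m = n := by
  have hma : m < a := by omega
  have hna : n < a := by omega
  have hmem : ({(0 : ZMod a), (m : ZMod a)} : Set (ZMod a)) ∈ P (m : ZMod a) :=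
    ⟨0, by rw [zero_add]⟩
  rw [h] at hmem
  obtain ⟨j, hj⟩ := hmem
  rcases Set.pair_eq_pair_iff.mp hj with ⟨h1, h2⟩ | ⟨h1, h2⟩
  · have : (m : ZMod a) = (n : ZMod a) := by rw [h2, ← h1, zero_add]
    have := congrArg ZMod.val this
    rwa [ZMod.val_cast_of_lt hma, ZMod.val_cast_of_lt hna] at this
  · have : ((m + n : ℕ) : ZMod a) = 0 := by
      push_cast
      linear_combination h2 - h1
    have hdvd := (ZMod.natCast_eq_zero_iff _ _).mp this
    have : m + n = 0 ∨ m + n = a := by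
      rcases Nat.eq_zero_or_pos (m + n) with h0 | hpos
      · exact Or.inl h0
      · exact Or.inr (le_antisymm (by omega) (Nat.le_of_dvd hpos hdvd))
    omega

private lemma ncard_P_cast_big (ha : 1 ≤ a) {m : ℕ} (hm : m ≤ a / 2)
    (h : a % 2 = 1 ∨ m < a / 2 ∨ m = 0) : (P (m : ZMod a)).ncard = a := by
  apply ncard_P_of
  rcases Nat.eq_zero_or_pos m with rfl | hpos
  · exact Or.inl (by push_cast; ring)
  · refine Or.inr ?_
    have : (2 : ZMod a) * (m : ZMod a) = ((2 * m : ℕ) : ZMod a) := by push_cast; ring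
    rw [this]
    intro hz
    have := (ZMod.natCast_eq_zero_iff _ _).mp hz
    have := Nat.le_of_dvd (by omega) this
    omega

private lemma ncard_P_cast_half (ha : a % 2 = 0) (ha2 : 2 ≤ a) :
    (P ((a / 2 : ℕ) : ZMod a)).ncard = a / 2 := by
  apply ncard_P_half
  · intro hz
    have := (ZMod.natCast_eq_zero_iff _ _).mp hz
    have := Nat.le_of_dvd (by omega) this
    omega
  · have : (2 : ZMod a) * ((a / 2 : ℕ) : ZMod a) = ((2 * (a / 2) : ℕ) : ZMod a) := by
      push_cast; ring
    rw [this, show 2 * (a / 2) = a by omega, ZMod.natCast_self]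

private lemma orbits_eq (ha : 1 ≤ a) (𝒪 : Set (Set (Set (ZMod a))))
    (h𝒪 : 𝒪 = {O | ∃ s : Set (ZMod a), (s.ncard = 1 ∨ s.ncard = 2) ∧
      O = {t | ∃ k : ℕ, (fun u : Set (ZMod a) => (· + 1) '' u)^[k] s = t}}) :
    𝒪 = (fun m : ℕ => P (m : ZMod a)) '' Set.Iic (a / 2) := by
  subst h𝒪
  ext O
  simp only [Set.mem_setOf_eq, Set.mem_image, Set.mem_Iic]
  constructor
  · rintro ⟨s, hs, rfl⟩
    have : ∃ i d : ZMod a, s = {i, i + d} := by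
      rcases hs with h1 | h2
      · obtain ⟨i, rfl⟩ := Set.ncard_eq_one.mp h1
        exact ⟨i, 0, by simp⟩
      · obtain ⟨i, j, hij, rfl⟩ := Set.ncard_eq_two.mp h2
        exact ⟨i, j - i, by rw [add_sub_cancel]⟩
    obtain ⟨i, d, rfl⟩ := this
    obtain ⟨m, hm, hPm⟩ := exists_rep ha d
    exact ⟨m, hm, by rw [orbit_pair, hPm]⟩
  · rintro ⟨m, hm, rfl⟩
    refine ⟨{(0 : ZMod a), (m : ZMod a)}, ?_, ?_⟩
    · rcases Nat.eq_zero_or_pos m with rfl | hpos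
      · left; simp
      · right
        apply Set.ncard_pair
        intro h
        have := congrArg ZMod.val h
        rw [ZMod.val_zero, ZMod.val_cast_of_lt (by omega)] at this
        omega
    · have : ({(0 : ZMod a), (m : ZMod a)} : Set (ZMod a)) = {0, 0 + (m : ZMod a)} := by
        rw [zero_add]
      rw [this, orbit_pair]
private theorem core_main (ha : 1 ≤ a) (𝒪 : Set (Set (Set (ZMod a))))
    (h𝒪 : 𝒪 = {O | ∃ s : Set (ZMod a), (s.ncard = 1 ∨ s.ncard = 2) ∧
      O = {t | ∃ k : ℕ, (fun u : Set (ZMod a) => (· + 1) '' u)^[k] s = t}}) :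
    (a % 2 = 0 →
      Set.ncard {O ∈ 𝒪 | O.ncard = a / 2} = 1 ∧
      Set.ncard {O ∈ 𝒪 | O.ncard = a} = a / 2 ∧
      ∀ O ∈ 𝒪, O.ncard = a / 2 ∨ O.ncard = a) ∧
    (a % 2 = 1 →
      Set.ncard 𝒪 = (a + 1) / 2 ∧ ∀ O ∈ 𝒪, O.ncard = a) := by
  have horb := orbits_eq ha 𝒪 h𝒪
  have hinjOn : Set.InjOn (fun m : ℕ => P (m : ZMod a)) (Set.Iic (a / 2)) :=
    fun m hm n hn h => P_cast_inj ha hm hn h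
  constructor
  · intro he
    have a2 : 2 ≤ a := by omega
    have S1 : {O ∈ 𝒪 | O.ncard = a / 2} = {P ((a / 2 : ℕ) : ZMod a)} := by
      ext O
      simp only [Set.mem_setOf_eq, Set.mem_singleton_iff, horb, Set.mem_image, Set.mem_Iic]
      constructor
      · rintro ⟨⟨m, hm, rfl⟩, hc⟩
        rcases eq_or_lt_of_le hm with rfl | hlt
        · rfl
        · rw [ncard_P_cast_big ha hm (Or.inr (Or.inl hlt))] at hc
          omega
      · rintro rfl
        exact ⟨⟨a / 2, le_refl _, rfl⟩, ncard_P_cast_half he a2⟩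
    have S2 : {O ∈ 𝒪 | O.ncard = a} = (fun m : ℕ => P (m : ZMod a)) '' Set.Iio (a / 2) := by
      ext O
      simp only [Set.mem_setOf_eq, horb, Set.mem_image, Set.mem_Iic, Set.mem_Iio]
      constructor
      · rintro ⟨⟨m, hm, rfl⟩, hc⟩
        rcases eq_or_lt_of_le hm with rfl | hlt
        · rw [ncard_P_cast_half he a2] at hc
          omega
        · exact ⟨m, hlt, rfl⟩
      · rintro ⟨m, hlt, rfl⟩
        exact ⟨⟨m, le_of_lt hlt, rfl⟩, ncard_P_cast_big ha (le_of_lt hlt) (Or.inr (Or.inl hlt))⟩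
    refine ⟨by rw [S1, Set.ncard_singleton], ?_, ?_⟩
    · rw [S2, Set.ncard_image_of_injOn (hinjOn.mono Set.Iio_subset_Iic_self),
        ← Finset.coe_range, Set.ncard_coe_finset, Finset.card_range]
    · intro O hO
      rw [horb] at hO
      obtain ⟨m, hm, rfl⟩ := hO
      rcases eq_or_lt_of_le (Set.mem_Iic.mp hm) with rfl | hlt
      · exact Or.inl (ncard_P_cast_half he a2)
      · exact Or.inr (ncard_P_cast_big ha (le_of_lt hlt) (Or.inr (Or.inl hlt)))
  · intro ho
    constructor
    · rw [horb, Set.ncard_image_of_injOn hinjOn, ← Finset.coe_Iic, Set.ncard_coe_finset,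
        Nat.card_Iic]
      omega
    · intro O hO
      rw [horb] at hO
      obtain ⟨m, hm, rfl⟩ := hO
      exact ncard_P_cast_big ha (Set.mem_Iic.mp hm) (Or.inl ho)
end Core
/-- A cycle of length a of α contributes, on unordered pairs (subsets of size 1 or 2)
with elements in its support, the cycle-structure monomial x_{a/2}·x_a^{a/2} if a is even
and x_a^{(a+1)/2} if a is odd. -/
theorem stmt11 {X : Type*} [Fintype X] (α : Equiv.Perm X) (a : ℕ) (ha : 1 ≤ a)
    (xa : X) (Sa : Set X) (hSa : Sa = {y | α.SameCycle xa y}) (hca : Sa.ncard = a) :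
    ∀ (F : Set X → Set X), F = (fun s => α '' s) →
    ∀ Q : Set (Set X), Q = {s | s ⊆ Sa ∧ (s.ncard = 1 ∨ s.ncard = 2)} →
    ∀ 𝒪 : Set (Set (Set X)), 𝒪 = {O | ∃ s ∈ Q, O = {t | ∃ k : ℕ, F^[k] s = t}} →
    (a % 2 = 0 →
      Set.ncard {O ∈ 𝒪 | O.ncard = a / 2} = 1 ∧
      Set.ncard {O ∈ 𝒪 | O.ncard = a} = a / 2 ∧
      ∀ O ∈ 𝒪, O.ncard = a / 2 ∨ O.ncard = a) ∧
    (a % 2 = 1 →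
      Set.ncard 𝒪 = (a + 1) / 2 ∧ ∀ O ∈ 𝒪, O.ncard = a) := by
  intro F hF Q hQ 𝒪 h𝒪
  haveI : NeZero a := ⟨by omega⟩
  classical
  -- xa is a periodic point of α
  have hperN : Function.IsPeriodicPt ⇑α (orderOf α) xa := by
    show α^[orderOf α] xa = xa
    rw [Equiv.Perm.iterate_eq_pow, pow_orderOf_eq_one]
    rfl
  have hxa : xa ∈ Function.periodicPts ⇑α := ⟨orderOf α, orderOf_pos α, hperN⟩
  set m := Function.minimalPeriod ⇑α xa with hmdef
  have hmpos : 0 < m := Function.minimalPeriod_pos_of_mem_periodicPts hxa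
  have hSa2 : Sa = (fun n : ℕ => α^[n] xa) '' Set.Iio m := by
    rw [hSa]
    ext y
    simp only [Set.mem_setOf_eq, Set.mem_image, Set.mem_Iio]
    constructor
    · intro h
      obtain ⟨i, _, hiy⟩ := h.exists_pow_eq'
      refine ⟨i % m, Nat.mod_lt _ hmpos, ?_⟩
      rw [hmdef, Function.iterate_mod_minimalPeriod_eq]
      exact hiy
    · rintro ⟨n, _, rfl⟩
      exact ⟨(n : ℤ), by rw [zpow_natCast]; rfl⟩
  have hma : m = a := by
    rw [hSa2, Set.ncard_image_of_injOn Function.iterate_injOn_Iio_minimalPeriod,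
      ← Finset.coe_range, Set.ncard_coe_finset, Finset.card_range] at hca
    exact hca
  -- the parametrization of Sa by ZMod a
  set e : ZMod a → X := fun k => α^[k.val] xa with hedef
  have he_cast : ∀ n : ℕ, e (n : ZMod a) = α^[n] xa := by
    intro n
    show α^[(n : ZMod a).val] xa = α^[n] xa
    rw [ZMod.val_natCast, ← hma, Function.iterate_mod_minimalPeriod_eq]
  have he_inj : Function.Injective e := by
    intro i j h
    have hmem : ∀ k : ZMod a, k.val ∈ Set.Iio m := fun k => by
      rw [hma]; exact k.val_lt
    exact ZMod.val_injective a
      (Function.iterate_injOn_Iio_minimalPeriod (hmem i) (hmem j) h)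
  have he_range : Set.range e = Sa := by
    rw [hSa2]
    ext y
    constructor
    · rintro ⟨k, rfl⟩
      exact ⟨k.val, by rw [hma] at *; exact k.val_lt, rfl⟩
    · rintro ⟨n, _, rfl⟩
      exact ⟨(n : ZMod a), he_cast n⟩
  have he_step : ∀ k : ZMod a, α (e k) = e (k + 1) := by
    intro k
    have h1 : k + 1 = ((k.val + 1 : ℕ) : ZMod a) := by
      push_cast [ZMod.natCast_zmod_val]
      ring
    rw [h1, he_cast, Function.iterate_succ_apply']
  -- transfer to ZMod a
  set Φ : Set (ZMod a) → Set X := fun t => e '' t with hΦdef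
  have hΦinj : Function.Injective Φ := Set.image_injective.mpr he_inj
  have hF1 : ∀ t : Set (ZMod a), F (Φ t) = Φ ((fun i : ZMod a => i + 1) '' t) := by
    intro t
    rw [hF]
    show α '' (e '' t) = e '' ((fun i : ZMod a => i + 1) '' t)
    rw [← Set.image_comp, ← Set.image_comp]
    apply congrFun
    apply congrArg
    funext x
    exact he_step x
  have hFk : ∀ (k : ℕ) (t : Set (ZMod a)),
      F^[k] (Φ t) = Φ ((fun u : Set (ZMod a) => (· + 1) '' u)^[k] t) := by
    intro k
    induction k with
    | zero => intro t; rfl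
    | succ n ih =>
      intro t
      rw [Function.iterate_succ_apply', Function.iterate_succ_apply', ih, hF1]
  set QZ : Set (Set (ZMod a)) := {t | t.ncard = 1 ∨ t.ncard = 2} with hQZdef
  have hQ' : Q = Φ '' QZ := by
    rw [hQ]
    ext s
    simp only [Set.mem_setOf_eq, Set.mem_image, QZ]
    constructor
    · rintro ⟨hsub, hcard⟩
      have himg : Φ (e ⁻¹' s) = s :=
        Set.image_preimage_eq_of_subset (by rw [he_range]; exact hsub)
      refine ⟨e ⁻¹' s, ?_, himg⟩
      have hc2 := Set.ncard_image_of_injective (e ⁻¹' s) he_inj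
      rw [show e '' (e ⁻¹' s) = s from himg] at hc2
      rw [← hc2]
      exact hcard
    · rintro ⟨t, hcard, rfl⟩
      refine ⟨?_, ?_⟩
      · rw [← he_range]; exact Set.image_subset_range e t
      · rw [hΦdef]
        simp only
        rw [Set.ncard_image_of_injective t he_inj]
        exact hcard
  set 𝒪Z : Set (Set (Set (ZMod a))) := {O | ∃ t : Set (ZMod a), (t.ncard = 1 ∨ t.ncard = 2) ∧
      O = {u | ∃ k : ℕ, (fun u : Set (ZMod a) => (· + 1) '' u)^[k] t = u}} with h𝒪Zdef
  have horbit : ∀ t : Set (ZMod a), {u | ∃ k : ℕ, F^[k] (Φ t) = u}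
      = Φ '' {v | ∃ k : ℕ, (fun u : Set (ZMod a) => (· + 1) '' u)^[k] t = v} := by
    intro t
    ext u
    simp only [Set.mem_setOf_eq, Set.mem_image]
    constructor
    · rintro ⟨k, rfl⟩
      exact ⟨_, ⟨k, rfl⟩, (hFk k t).symm⟩
    · rintro ⟨v, ⟨k, rfl⟩, rfl⟩
      exact ⟨k, hFk k t⟩
  have h𝒪eq : 𝒪 = (fun O => Φ '' O) '' 𝒪Z := by
    rw [h𝒪, hQ']
    ext O
    simp only [Set.mem_setOf_eq, Set.mem_image, h𝒪Zdef]
    constructor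
    · rintro ⟨s, ⟨t, ht, rfl⟩, rfl⟩
      exact ⟨_, ⟨t, ht, rfl⟩, (horbit t).symm⟩
    · rintro ⟨O', ⟨t, ht, rfl⟩, rfl⟩
      exact ⟨Φ t, ⟨t, ht, rfl⟩, (horbit t).symm⟩
  have hImgInj : Function.Injective (fun O : Set (Set (ZMod a)) => Φ '' O) :=
    Set.image_injective.mpr hΦinj
  have hOcard : ∀ O : Set (Set (ZMod a)), (Φ '' O).ncard = O.ncard :=
    fun O => Set.ncard_image_of_injective O hΦinj
  have hsel : ∀ c : ℕ, {O ∈ 𝒪 | O.ncard = c} = (fun O => Φ '' O) '' {O ∈ 𝒪Z | O.ncard = c} := by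
    intro c
    rw [h𝒪eq]
    ext O
    simp only [Set.mem_setOf_eq, Set.mem_image]
    constructor
    · rintro ⟨⟨O', hO', rfl⟩, hc⟩
      exact ⟨O', ⟨hO', by rwa [hOcard] at hc⟩, rfl⟩
    · rintro ⟨O', ⟨hO', hc⟩, rfl⟩
      exact ⟨⟨O', hO', rfl⟩, by rwa [hOcard]⟩
  have main := core_main (a := a) ha 𝒪Z rfl
  constructor
  · intro he
    obtain ⟨h1, h2, h3⟩ := main.1 he
    refine ⟨?_, ?_, ?_⟩
    · rw [hsel (a / 2), Set.ncard_image_of_injective _ hImgInj]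
      exact h1
    · rw [hsel a, Set.ncard_image_of_injective _ hImgInj]
      exact h2
    · intro O hO
      rw [h𝒪eq] at hO
      obtain ⟨O', hO', rfl⟩ := hO
      rw [hOcard]
      exact h3 O' hO'
  · intro ho
    obtain ⟨h1, h2⟩ := main.2 ho
    refine ⟨?_, ?_⟩
    · rw [h𝒪eq, Set.ncard_image_of_injective _ hImgInj]
      exact h1
    · intro O hO
      rw [h𝒪eq] at hO
      obtain ⟨O', hO', rfl⟩ := hO
      rw [hOcard]
      exact h2 O' hO'
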